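/- Let ⟨N, M0⟩ be a marked Petri net with a basis partition π = (T_E, T_I). For every marking M and every firing sequence σ ∈ T* with M[σ⟩M_f, there exists a marking M_b reachable from M by a (possibly empty) sequence of minimal-explanation BRG-steps such that M_f ∈ R_I(M_b). (Equivalently: any firing sequence can be rearranged into the form σ_min,1 t_1 σ_min,2 t_2 ⋯ σ_min,k t_k σ', where each t_j ∈ T_E, each σ_min,j is a minimal explanation of t_j at the marking reached so far, and σ' ∈ T_I*, reaching the same marking M_f.) -/

import Mathlib

open scoped BigOperators

/-- A Petri net over places `P` and transitions `T`. -/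
structure PetriNet (P T : Type) where
  Pre : P → T → ℕ
  Post : P → T → ℕ

namespace PetriNet

variable {P T : Type}

/-- Incidence matrix `C = Post − Pre` (integer valued). -/
def C (N : PetriNet P T) (p : P) (t : T) : ℤ :=
  (N.Post p t : ℤ) - (N.Pre p t : ℤ)

/-- A transition `t` is enabled at marking `M`. -/
def Enabled (N : PetriNet P T) (M : P → ℕ) (t : T) : Prop :=
  ∀ p, N.Pre p t ≤ M p

/-- `Fires N M σ M'` means the sequence `σ` is enabled at `M` and its firing
yields `M'`, i.e. `M[σ⟩M'`. -/
inductive Fires (N : PetriNet P T) : (P → ℕ) → List T → (P → ℕ) → Prop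
  | nil (M : P → ℕ) : Fires N M [] M
  | cons {M M' M'' : P → ℕ} {t : T} {σ : List T} :
      N.Enabled M t →
      (∀ p, M' p = M p + N.Post p t - N.Pre p t) →
      Fires N M' σ M'' →
      Fires N M (t :: σ) M''

/-- The reachability set `R(N, M0)`. -/
def Reach (N : PetriNet P T) (M0 : P → ℕ) : Set (P → ℕ) :=
  {M | ∃ σ : List T, N.Fires M0 σ M}

/-- Arcs of the underlying directed graph on `P ⊕ T`, where only transitions
in `TI` are kept (the `TI`-induced subnet). -/
def Arc (N : PetriNet P T) (TI : Set T) : (P ⊕ T) → (P ⊕ T) → Prop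
  | Sum.inl p, Sum.inr t => t ∈ TI ∧ 0 < N.Pre p t
  | Sum.inr t, Sum.inl p => t ∈ TI ∧ 0 < N.Post p t
  | _, _ => False

/-- The `TI`-induced subnet is acyclic: no directed cycle in its graph. -/
def AcyclicOn (N : PetriNet P T) (TI : Set T) : Prop :=
  ∀ x, ¬ Relation.TransGen (N.Arc TI) x x

/-- `(TE, TI)` is a basis partition: `TE` and `TI` partition `T` and the
`TI`-induced subnet is acyclic. -/
def IsBasisPartition (N : PetriNet P T) (TE TI : Set T) : Prop :=
  (∀ t, t ∈ TE ↔ t ∉ TI) ∧ N.AcyclicOn TI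

/-- Boundedness of the marked net `⟨N, M0⟩`. -/
def Bounded (N : PetriNet P T) (M0 : P → ℕ) : Prop :=
  ∃ k : ℕ, ∀ M ∈ N.Reach M0, ∀ p, M p ≤ k

/-- A marking is dead if no transition is enabled at it. -/
def Dead (N : PetriNet P T) (M : P → ℕ) : Prop :=
  ∀ t : T, ¬ N.Enabled M t

/-- The set `Σ(M, t)` of explanations of `t` at `M`: implicit sequences whose
firing from `M` yields a marking enabling `t`. -/
def Expl (N : PetriNet P T) (TI : Set T) (M : P → ℕ) (t : T) : Set (List T) :=
  {σ | (∀ u ∈ σ, u ∈ TI) ∧ ∃ M', N.Fires M σ M' ∧ ∀ p, N.Pre p t ≤ M' p}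

/-- The set `Σ_min(M, t)` of minimal explanations of `t` at `M`. -/
def ExplMin [DecidableEq T] (N : PetriNet P T) (TI : Set T) (M : P → ℕ) (t : T) :
    Set (List T) :=
  {σ | σ ∈ N.Expl TI M t ∧
    ¬ ∃ σ' ∈ N.Expl TI M t,
      (∀ u, σ'.count u ≤ σ.count u) ∧ ∃ u, σ'.count u ≠ σ.count u}

/-- The set `Σ_max(M, t)` of maximal explanations of `t` at `M`. -/
def ExplMax [DecidableEq T] (N : PetriNet P T) (TI : Set T) (M : P → ℕ) (t : T) :
    Set (List T) :=
  {σ | σ ∈ N.Expl TI M t ∧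
    ¬ ∃ σ' ∈ N.Expl TI M t,
      (∀ u, σ.count u ≤ σ'.count u) ∧ ∃ u, σ'.count u ≠ σ.count u}

/-- `Y_min(M, t)`: firing vectors of minimal explanations. -/
def Ymin [DecidableEq T] (N : PetriNet P T) (TI : Set T) (M : P → ℕ) (t : T) :
    Set (T → ℕ) :=
  {y | ∃ σ ∈ N.ExplMin TI M t, ∀ u, σ.count u = y u}

/-- `Y_max(M, t)`: firing vectors of maximal explanations. -/
def Ymax [DecidableEq T] (N : PetriNet P T) (TI : Set T) (M : P → ℕ) (t : T) :
    Set (T → ℕ) :=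
  {y | ∃ σ ∈ N.ExplMax TI M t, ∀ u, σ.count u = y u}

/-- The set of basis markings `M_B` (smallest set containing `M0` and closed
under minimal-explanation steps). -/
inductive Basis [DecidableEq T] [Fintype T] (N : PetriNet P T) (TE TI : Set T)
    (M0 : P → ℕ) : (P → ℕ) → Prop
  | base : Basis N TE TI M0 M0
  | step {M M' : P → ℕ} {t : T} {y : T → ℕ} :
      Basis N TE TI M0 M →
      t ∈ TE →
      y ∈ N.Ymin TI M t →
      (∀ p, (M' p : ℤ) = (M p : ℤ) + (∑ u, N.C p u * y u) + N.C p t) →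
      Basis N TE TI M0 M'

/-- The set of minimax basis markings `M_BM` (smallest set containing `M0` and
closed under minimal- or maximal-explanation steps). -/
inductive Minimax [DecidableEq T] [Fintype T] (N : PetriNet P T) (TE TI : Set T)
    (M0 : P → ℕ) : (P → ℕ) → Prop
  | base : Minimax N TE TI M0 M0
  | step {M M' : P → ℕ} {t : T} {y : T → ℕ} :
      Minimax N TE TI M0 M →
      t ∈ TE →
      (y ∈ N.Ymin TI M t ∨ y ∈ N.Ymax TI M t) →
      (∀ p, (M' p : ℤ) = (M p : ℤ) + (∑ u, N.C p u * y u) + N.C p t) →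
      Minimax N TE TI M0 M'

/-- The implicit reach `R_I(M_b)`: markings reachable from `M_b` by firing
only implicit transitions. -/
def ReachI (N : PetriNet P T) (TI : Set T) (Mb : P → ℕ) : Set (P → ℕ) :=
  {M | ∃ σ : List T, (∀ u ∈ σ, u ∈ TI) ∧ N.Fires Mb σ M}

/-- One step of the minimax-BRG: `M1 ⇒ M2`. -/
def BrgStep [DecidableEq T] [Fintype T] (N : PetriNet P T) (TE TI : Set T)
    (M1 M2 : P → ℕ) : Prop :=
  ∃ t ∈ TE, ∃ y : T → ℕ, (y ∈ N.Ymin TI M1 t ∨ y ∈ N.Ymax TI M1 t) ∧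
    ∀ p, (M2 p : ℤ) = (M1 p : ℤ) + (∑ u, N.C p u * y u) + N.C p t

/-- One step of the BRG using only minimal explanations. -/
def MinBrgStep [DecidableEq T] [Fintype T] (N : PetriNet P T) (TE TI : Set T)
    (M1 M2 : P → ℕ) : Prop :=
  ∃ t ∈ TE, ∃ y ∈ N.Ymin TI M1 t,
    ∀ p, (M2 p : ℤ) = (M1 p : ℤ) + (∑ u, N.C p u * y u) + N.C p t

/-- The minimax-BRG is unobstructed: every minimax basis marking can reach, by
BRG-steps, an i-coreachable minimax basis marking. -/
def Unobstructed [DecidableEq T] [Fintype T] (N : PetriNet P T) (TE TI : Set T)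
    (M0 : P → ℕ) (MF : Set (P → ℕ)) : Prop :=
  ∀ Mb, N.Minimax TE TI M0 Mb →
    ∃ Mb', Relation.ReflTransGen (N.BrgStep TE TI) Mb Mb' ∧
      N.Minimax TE TI M0 Mb' ∧ (N.ReachI TI Mb' ∩ MF).Nonempty

/-- `Σ_I,max(M)`: maximal implicit firing sequences at `M`. -/
def ImplMax [DecidableEq T] (N : PetriNet P T) (TI : Set T) (M : P → ℕ) :
    Set (List T) :=
  {σ | (∀ u ∈ σ, u ∈ TI) ∧ (∃ M', N.Fires M σ M') ∧
    ¬ ∃ σ' : List T, (∀ u ∈ σ', u ∈ TI) ∧ (∃ M', N.Fires M σ' M') ∧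
      (∀ u, σ.count u ≤ σ'.count u) ∧ ∃ u, σ'.count u ≠ σ.count u}

/-- `Y_I,max(M)`: firing vectors of maximal implicit firing sequences. -/
def YImax [DecidableEq T] (N : PetriNet P T) (TI : Set T) (M : P → ℕ) :
    Set (T → ℕ) :=
  {y | ∃ σ ∈ N.ImplMax TI M, ∀ u, σ.count u = y u}

end PetriNet

namespace PetriNetAux

open PetriNet

variable {P T : Type}

lemma fires_append {N : PetriNet P T} {M M' M'' : P → ℕ} {a b : List T}
    (h1 : N.Fires M a M') (h2 : N.Fires M' b M'') : N.Fires M (a ++ b) M'' := by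
  induction h1 with
  | nil => simpa using h2
  | cons he hm _ ih => exact Fires.cons he hm (ih h2)

lemma fires_split {N : PetriNet P T} {M M'' : P → ℕ} {a b : List T}
    (h : N.Fires M (a ++ b) M'') : ∃ M', N.Fires M a M' ∧ N.Fires M' b M'' := by
  induction a generalizing M with
  | nil => exact ⟨M, Fires.nil M, by simpa using h⟩
  | cons t a ih =>
    rw [List.cons_append] at h
    cases h with
    | cons he hm h' =>
      obtain ⟨M', h1, h2⟩ := ih h'
      exact ⟨M', Fires.cons he hm h1, h2⟩

lemma fires_state_eq [Fintype T] [DecidableEq T] {N : PetriNet P T}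
    {M M' : P → ℕ} {σ : List T} (h : N.Fires M σ M') :
    ∀ p, (M' p : ℤ) = (M p : ℤ) + ∑ u, N.C p u * σ.count u := by
  induction h with
  | nil => simp
  | @cons M M' M'' t σ he hm _ ih =>
    intro p
    have h1 : (M' p : ℤ) = (M p : ℤ) + N.C p t := by
      have hle : N.Pre p t ≤ M p + N.Post p t := le_trans (he p) (Nat.le_add_right _ _)
      rw [hm p]
      push_cast [Nat.cast_sub hle, C]
      ring
    rw [ih p, h1]
    have hsplit : (∑ x : T, N.C p x * ((t :: σ).count x : ℤ))
        = (∑ x : T, N.C p x * (σ.count x : ℤ)) + N.C p t := by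
      have hterm : ∀ x : T, N.C p x * ((t :: σ).count x : ℤ)
          = N.C p x * (σ.count x : ℤ) + (if x = t then N.C p t else 0) := by
        intro x
        by_cases hx : x = t
        · subst hx
          simp [List.count_cons]
          ring
        · simp [List.count_cons, hx, Ne.symm hx]
      rw [Finset.sum_congr rfl (fun x _ => hterm x), Finset.sum_add_distrib,
        Finset.sum_ite_eq' Finset.univ t (fun _ => N.C p t)]
      simp
    rw [hsplit]
    ring

lemma length_eq_sum_count [Fintype T] [DecidableEq T] (σ : List T) :
    σ.length = ∑ u, σ.count u := by
  induction σ with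
  | nil => simp
  | cons t σ ih =>
    have hcount : ∀ u : T, (t :: σ).count u = σ.count u + (if u = t then 1 else 0) := by
      intro u
      by_cases hu : u = t <;> simp [List.count_cons, hu] <;> exact Ne.symm hu
    rw [Finset.sum_congr rfl (fun u _ => hcount u), Finset.sum_add_distrib]
    simp [ih]

/-- In an acyclic subnet, the state equation is sufficient for realizability. -/
lemma acyclic_realize [Fintype T] [DecidableEq T] {N : PetriNet P T} {TI : Set T}
    (hac : N.AcyclicOn TI) :
    ∀ n (z : T → ℕ), (∑ u, z u) = n → (∀ u, 0 < z u → u ∈ TI) →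
      ∀ m m₃ : P → ℕ, (∀ p, (m₃ p : ℤ) = (m p : ℤ) + ∑ u, N.C p u * z u) →
      ∃ τ : List T, (∀ u ∈ τ, u ∈ TI) ∧ (∀ u, τ.count u = z u) ∧ N.Fires m τ m₃ := by
  intro n
  induction n with
  | zero =>
    intro z hsum _ m m₃ heq
    have hz : ∀ u, z u = 0 := by
      intro u
      have := Finset.sum_eq_zero_iff.mp hsum
      exact this u (Finset.mem_univ u)
    have hm : m₃ = m := by
      funext p
      have := heq p
      simp [hz] at this
      exact_mod_cast this
    exact ⟨[], by simp, by simp [hz], by rw [hm]; exact Fires.nil m⟩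
  | succ n ih =>
    intro z hsum hsupp m m₃ heq
    -- relation on transitions: u feeds some place that feeds t
    set R : T → T → Prop := fun u t =>
      Relation.TransGen (N.Arc TI) (Sum.inr u) (Sum.inr t) with hR
    haveI : IsTrans T R := ⟨fun _ _ _ h1 h2 => h1.trans h2⟩
    haveI : IsIrrefl T R := ⟨fun a h => hac (Sum.inr a) h⟩
    have hwf : WellFounded R := Finite.wellFounded_of_trans_of_irrefl R
    have hne : ({t | 0 < z t} : Set T).Nonempty := by
      by_contra hctr
      rw [Set.not_nonempty_iff_eq_empty, Set.eq_empty_iff_forall_notMem] at hctr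
      have : ∀ t, z t = 0 := fun t => by
        have := hctr t
        simp [Set.mem_setOf_eq] at this
        omega
      simp [this] at hsum
    obtain ⟨t, ht, hmin⟩ := hwf.has_min {t | 0 < z t} hne
    have htz : 0 < z t := ht
    have htI : t ∈ TI := hsupp t htz
    -- t is enabled at m
    have hen : N.Enabled m t := by
      intro p
      by_contra hpt
      push_neg at hpt
      -- find a feeder u
      have hfeed : ∃ u, 0 < z u ∧ 0 < N.Post p u := by
        by_contra hctr
        push_neg at hctr
        have hterm : ∀ u : T, N.C p u * z u ≤ (-(N.Pre p u : ℤ)) * z u := by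
          intro u
          rcases Nat.eq_zero_or_pos (z u) with h0 | h0
          · simp [h0]
          · have : N.Post p u = 0 := Nat.le_zero.mp (hctr u h0)
            simp [C, this]
        have hsum_le : (∑ u, N.C p u * z u) ≤ ∑ u, (-(N.Pre p u : ℤ)) * z u :=
          Finset.sum_le_sum (fun u _ => hterm u)
        have hterm2 : ∀ u : T, (-(N.Pre p u : ℤ)) * z u ≤ (if u = t then (-(N.Pre p t : ℤ)) * z t else 0) := by
          intro u
          by_cases hu : u = t
          · simp [hu]
          · simp [hu]
            positivity
        have hsum_le2 : (∑ u, (-(N.Pre p u : ℤ)) * z u) ≤ ∑ u, (if u = t then (-(N.Pre p t : ℤ)) * z t else 0) :=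
          Finset.sum_le_sum (fun u _ => hterm2 u)
        rw [Finset.sum_ite_eq' Finset.univ t (fun _ => (-(N.Pre p t : ℤ)) * z t)] at hsum_le2
        simp at hsum_le2
        have hneg : (∑ u : T, (-(N.Pre p u : ℤ)) * z u) = -(∑ u : T, ((N.Pre p u : ℤ)) * z u) := by
          simp [neg_mul, Finset.sum_neg_distrib]
        have hpos : (0:ℤ) ≤ m₃ p := Int.natCast_nonneg _
        rw [heq p] at hpos
        have h1 : (-(N.Pre p t : ℤ)) * z t ≤ -(N.Pre p t : ℤ) := by
          have : (1:ℤ) ≤ z t := by exact_mod_cast htz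
          nlinarith [Int.natCast_nonneg (N.Pre p t)]
        have h2 : (m p : ℤ) < N.Pre p t := by exact_mod_cast hpt
        linarith
      obtain ⟨u, huz, hupost⟩ := hfeed
      have huI : u ∈ TI := hsupp u huz
      have harc1 : N.Arc TI (Sum.inr u) (Sum.inl p) := ⟨huI, hupost⟩
      have harc2 : N.Arc TI (Sum.inl p) (Sum.inr t) := ⟨htI, lt_of_le_of_lt (Nat.zero_le _) hpt⟩
      have hRut : R u t := Relation.TransGen.head harc1 (Relation.TransGen.single harc2)
      exact hmin u huz hRut
    -- fire t
    set m' : P → ℕ := fun p => m p + N.Post p t - N.Pre p t with hm'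
    set z' : T → ℕ := fun u => if u = t then z u - 1 else z u with hz'
    have hsum' : (∑ u, z' u) = n := by
      have : (∑ u, z' u) + 1 = ∑ u, z u := by
        have hterm : ∀ u : T, z u = z' u + (if u = t then 1 else 0) := by
          intro u
          by_cases hu : u = t
          · rw [hu]; simp [hz']; omega
          · simp [hz', hu]
        rw [Finset.sum_congr rfl (fun u _ => hterm u), Finset.sum_add_distrib]
        simp
      omega
    have hsupp' : ∀ u, 0 < z' u → u ∈ TI := by
      intro u hu
      apply hsupp u
      by_cases h : u = t
      · rw [h] at hu ⊢
        simp [hz'] at hu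
        omega
      · simpa [hz', h] using hu
    have heq' : ∀ p, (m₃ p : ℤ) = (m' p : ℤ) + ∑ u, N.C p u * z' u := by
      intro p
      have hle : N.Pre p t ≤ m p + N.Post p t := le_trans (hen p) (Nat.le_add_right _ _)
      have hm'p : (m' p : ℤ) = (m p : ℤ) + N.C p t := by
        simp only [hm']
        push_cast [Nat.cast_sub hle, C]
        ring
      have hsplit : (∑ u, N.C p u * z u) = (∑ u, N.C p u * z' u) + N.C p t := by
        have hterm : ∀ u : T, N.C p u * (z u : ℤ)
            = N.C p u * z' u + (if u = t then N.C p t else 0) := by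
          intro u
          by_cases hu : u = t
          · rw [hu]
            have h1 : ((z' t : ℕ) : ℤ) = (z t : ℤ) - 1 := by
              simp only [hz', if_pos rfl]
              rw [Nat.cast_sub htz]
              push_cast
              ring
            rw [if_pos rfl, h1]; ring
          · simp [hz', hu]
        rw [Finset.sum_congr rfl (fun u _ => hterm u), Finset.sum_add_distrib,
          Finset.sum_ite_eq' Finset.univ t (fun _ => N.C p t)]
        simp
      rw [heq p, hsplit, hm'p]
      ring
    obtain ⟨τ, hτI, hτc, hτf⟩ := ih z' hsum' hsupp' m' m₃ heq'
    refine ⟨t :: τ, ?_, ?_, Fires.cons hen (fun p => rfl) hτf⟩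
    · intro u hu
      rcases List.mem_cons.mp hu with h | h
      · exact h ▸ htI
      · exact hτI u h
    · intro u
      by_cases hu : u = t
      · subst hu
        simp [List.count_cons, hτc u, hz']
        omega
      · simp [List.count_cons, hu, hτc u, hz', hu, Ne.symm hu]

/-- Existence of a minimal explanation below a given explanation. -/
lemma exists_min_expl [Fintype T] [DecidableEq T] {N : PetriNet P T} {TI : Set T}
    {M : P → ℕ} {t : T} {σI : List T} (hE : σI ∈ N.Expl TI M t) :
    ∃ σm, σm ∈ N.ExplMin TI M t ∧ ∀ u, σm.count u ≤ σI.count u := by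
  classical
  set S : Set (List T) := {l | l ∈ N.Expl TI M t ∧ ∀ u, l.count u ≤ σI.count u} with hS
  have hkey : ∃ n, ∃ l, l ∈ S ∧ l.length = n := ⟨σI.length, σI, ⟨hE, fun u => le_rfl⟩, rfl⟩
  obtain ⟨l, hlS, hlen⟩ := Nat.find_spec hkey
  refine ⟨l, ⟨hlS.1, ?_⟩, hlS.2⟩
  rintro ⟨σ', hσ'E, hle, u0, hne⟩
  have hσ'S : σ' ∈ S := ⟨hσ'E, fun u => le_trans (hle u) (hlS.2 u)⟩
  have hlt : σ'.length < l.length := by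
    rw [length_eq_sum_count, length_eq_sum_count]
    apply Finset.sum_lt_sum (fun u _ => hle u)
    exact ⟨u0, Finset.mem_univ u0, lt_of_le_of_ne (hle u0) hne⟩
  have := Nat.find_min' hkey ⟨σ', hσ'S, rfl⟩
  omega

/-- Decompose a list at its first non-implicit transition. -/
lemma decompose (TI : Set T) : ∀ σ : List T,
    (∀ u ∈ σ, u ∈ TI) ∨
      ∃ σI t σ', σ = σI ++ t :: σ' ∧ (∀ u ∈ σI, u ∈ TI) ∧ t ∉ TI := by
  intro σ
  induction σ with
  | nil => left; simp
  | cons a σ ih =>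
    by_cases ha : a ∈ TI
    · rcases ih with h | ⟨σI, t, σ', heq, hI, htI⟩
      · left
        intro u hu
        rcases List.mem_cons.mp hu with h' | h'
        · exact h' ▸ ha
        · exact h u h'
      · right
        refine ⟨a :: σI, t, σ', by rw [heq]; rfl, ?_, htI⟩
        intro u hu
        rcases List.mem_cons.mp hu with h' | h'
        · exact h' ▸ ha
        · exact hI u h'
    · right
      exact ⟨[], a, σ, rfl, by simp, ha⟩

end PetriNetAux

open PetriNet in
/-- Any firing sequence `M[σ⟩M_f` can be rearranged so that
`M_f` lies in the implicit reach of a marking obtained from `M` by a sequence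
of minimal-explanation BRG-steps. -/
theorem statement15 {P T : Type} [Fintype T] [DecidableEq T]
    (N : PetriNet P T) (M0 : P → ℕ) (TE TI : Set T)
    (hbp : N.IsBasisPartition TE TI)
    (M Mf : P → ℕ) (σ : List T) (h : N.Fires M σ Mf) :
    ∃ Mb : P → ℕ, Relation.ReflTransGen (N.MinBrgStep TE TI) M Mb ∧
      Mf ∈ N.ReachI TI Mb := by
  classical
  suffices H : ∀ n (σ : List T), σ.length ≤ n → ∀ M Mf, N.Fires M σ Mf →
      ∃ Mb : P → ℕ, Relation.ReflTransGen (N.MinBrgStep TE TI) M Mb ∧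
        Mf ∈ N.ReachI TI Mb by
    exact H σ.length σ le_rfl M Mf h
  clear h M Mf σ
  intro n
  induction n with
  | zero =>
    intro σ hlen M Mf h
    have : σ = [] := List.length_eq_zero_iff.mp (Nat.le_zero.mp hlen)
    subst this
    cases h
    exact ⟨M, Relation.ReflTransGen.refl, [], by simp, PetriNet.Fires.nil M⟩
  | succ n ih =>
    intro σ hlen M Mf h
    rcases PetriNetAux.decompose TI σ with hall | ⟨σI, t, σ', heq, hIimp, htI⟩
    · -- all implicit
      exact ⟨M, Relation.ReflTransGen.refl, σ, hall, h⟩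
    · subst heq
      have htE : t ∈ TE := (hbp.1 t).mpr htI
      obtain ⟨M₁, hfI, hrest⟩ := PetriNetAux.fires_split h
      cases hrest with
      | @cons _ M₂'' _ _ _ hen hM₂'' hσ' =>
        -- σI is an explanation of t at M
        have hexp : σI ∈ N.Expl TI M t := ⟨hIimp, M₁, hfI, hen⟩
        obtain ⟨σm, hσmMin, hσmLe⟩ := PetriNetAux.exists_min_expl hexp
        obtain ⟨hσmI, M', hfm, hpre⟩ := hσmMin.1
        set M₂ : P → ℕ := fun p => M' p + N.Post p t - N.Pre p t with hM₂
        -- state equations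
        have hM'eq := PetriNetAux.fires_state_eq hfm
        have hM₁eq := PetriNetAux.fires_state_eq hfI
        have hM₂eq : ∀ p, (M₂ p : ℤ) = (M p : ℤ) + (∑ u, N.C p u * σm.count u) + N.C p t := by
          intro p
          have hle : N.Pre p t ≤ M' p + N.Post p t := le_trans (hpre p) (Nat.le_add_right _ _)
          have h0 : (M₂ p : ℤ) = (M' p : ℤ) + (N.Post p t : ℤ) - N.Pre p t := by
            simp only [hM₂]
            push_cast [Nat.cast_sub hle]
            ring
          rw [h0, hM'eq p]
          simp only [PetriNet.C]
          ring
        have hstep : N.MinBrgStep TE TI M M₂ :=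
          ⟨t, htE, fun u => σm.count u, ⟨σm, hσmMin, fun u => rfl⟩, hM₂eq⟩
        -- residual vector
        set z : T → ℕ := fun u => σI.count u - σm.count u with hz
        have hzsupp : ∀ u, 0 < z u → u ∈ TI := by
          intro u hu
          have : 0 < σI.count u := by simp only [hz] at hu; omega
          exact hIimp u (List.count_pos_iff.mp this)
        have hM₂''eq : ∀ p, (M₂'' p : ℤ) = (M₂ p : ℤ) + ∑ u, N.C p u * z u := by
          intro p
          have hle : N.Pre p t ≤ M₁ p + N.Post p t := le_trans (hen p) (Nat.le_add_right _ _)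
          have h1 : (M₂'' p : ℤ) = (M₁ p : ℤ) + N.C p t := by
            rw [hM₂'' p]
            push_cast [Nat.cast_sub hle, PetriNet.C]
            ring
          have h2 : ∀ u : T, (z u : ℤ) = (σI.count u : ℤ) - (σm.count u : ℤ) := by
            intro u
            simp only [hz]
            exact_mod_cast Nat.cast_sub (hσmLe u)
          have h3 : (∑ u, N.C p u * z u)
              = (∑ u, N.C p u * σI.count u) - ∑ u, N.C p u * σm.count u := by
            rw [← Finset.sum_sub_distrib]
            apply Finset.sum_congr rfl
            intro u _
            rw [h2 u]
            ring
          rw [h1, hM₁eq p, hM₂eq p, h3]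
          ring
        obtain ⟨τ, hτI, hτc, hτf⟩ :=
          PetriNetAux.acyclic_realize hbp.2 (∑ u, z u) z rfl hzsupp M₂ M₂'' hM₂''eq
        have hfires2 : N.Fires M₂ (τ ++ σ') Mf := PetriNetAux.fires_append hτf hσ'
        have hlen2 : (τ ++ σ').length ≤ n := by
          have hτlen : τ.length ≤ σI.length := by
            rw [PetriNetAux.length_eq_sum_count, PetriNetAux.length_eq_sum_count]
            apply Finset.sum_le_sum
            intro u _
            rw [hτc u]
            simp only [hz]
            omega
          have : (σI ++ t :: σ').length = σI.length + σ'.length + 1 := by simp; omega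
          simp only [List.length_append] at *
          omega
        obtain ⟨Mb, hrel, hreach⟩ := ih (τ ++ σ') hlen2 M₂ Mf hfires2
        exact ⟨Mb, Relation.ReflTransGen.head hstep hrel, hreach⟩
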